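/- Let k ≥ 2 be an integer, let G₁ and G₂ be non-empty finite simple graphs, and let s ≥ 2 be an integer with the Ramsey property for (G₁, G₂), i.e., every blue/red edge-coloring of the complete graph K_s contains a blue copy of G₁ or a red copy of G₂. Then for every integer n ≥ (k³/12)·s³, every covering [k]-uniform hypergraph H on n vertices, together with any blue/red coloring of its edges, contains a blue Berge copy of G₁ or a red Berge copy of G₂. In particular, the cover Ramsey number satisfies R̂^[k](BG₁, BG₂) ≤ (k³/12)·R(G₁,G₂)³. -/

import Mathlib

/-- `G` has a Berge copy in the hypergraph `H` (a finite set of edges, each a finite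
set of vertices) all of whose hyperedges satisfy the predicate `P`: there are distinct
core vertices `y v` (one for each vertex `v` of `G`) and distinct hyperedges `f e`
(one for each edge `e` of `G`) such that each edge `e = uv` of `G` satisfies
`{y u, y v} ⊆ f e`. -/
def HasBergeCopy {α V : Type*} (G : SimpleGraph α) (H : Finset (Finset V))
    (P : Finset V → Prop) : Prop :=
  ∃ (y : α → V) (f : Sym2 α → Finset V),
    Function.Injective y ∧ Set.InjOn f G.edgeSet ∧
      ∀ e ∈ G.edgeSet, f e ∈ H ∧ P (f e) ∧ ∀ v ∈ e, y v ∈ f e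

/-- Cover Ramsey upper bound: if `s` has the Ramsey property for `(G₁, G₂)` and
`n ≥ (k³/12)·s³`, then every 2-colored covering `[k]`-uniform hypergraph on `n`
vertices contains a blue Berge-`G₁` or a red Berge-`G₂`. -/
lemma card_sym2_not_isDiag {α : Type*} [DecidableEq α] (h : Finset α) :
    ((h.sym2).filter (fun q => ¬ q.IsDiag)).card = h.card.choose 2 := by
  have h1 : (h.sym2).filter (fun q => ¬ q.IsDiag) = h.offDiag.image Sym2.mk.uncurry := by
    rw [Finset.sym2_eq_image]
    exact Sym2.filter_image_mk_not_isDiag h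
  have h2 : (h.sym2).filter (fun q => q.IsDiag) = h.diag.image Sym2.mk.uncurry := by
    rw [Finset.sym2_eq_image]
    exact Sym2.filter_image_mk_isDiag h
  have h3 := Finset.card_filter_add_card_filter_not
    (s := h.sym2) (p := fun q => q.IsDiag)
  rw [Finset.card_sym2, h2] at h3
  have h4 : (h.diag.image Sym2.mk.uncurry).card = h.card := by
    rw [Finset.card_image_of_injOn, Finset.diag_card]
    intro a ha b hb hab
    rw [Finset.mem_coe, Finset.mem_diag] at ha hb
    have heq : a.1 = b.1 := by
      have := Sym2.eq_iff.1 (by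
        exact hab)
      rcases this with ⟨h5, _⟩ | ⟨h5, h6⟩
      · exact h5
      · exact h5.trans hb.2.symm
    exact Prod.ext heq (by rw [← ha.2, ← hb.2, heq])
  rw [h4] at h3
  have h5 : (h.card + 1).choose 2 = h.card.choose 2 + h.card := by
    rw [show (h.card+1).choose 2 = h.card.choose 1 + h.card.choose 2 from Nat.choose_succ_succ' _ _, Nat.choose_one_right]
    omega
  omega

lemma card_supersets_le {n s : ℕ} (T : Finset (Fin n)) (hT : 3 ≤ T.card) :
    (((Finset.univ : Finset (Fin n)).powersetCard s).filter (fun S => T ⊆ S)).card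
      ≤ (n - 3).choose (s - 3) := by
  obtain ⟨T₃, hT₃sub, hT₃card⟩ := Finset.exists_subset_card_eq hT
  calc (((Finset.univ : Finset (Fin n)).powersetCard s).filter (fun S => T ⊆ S)).card
      ≤ (((Finset.univ : Finset (Fin n)).powersetCard s).filter (fun S => T₃ ⊆ S)).card := by
        apply Finset.card_le_card
        intro S hS
        rw [Finset.mem_filter] at hS ⊢
        exact ⟨hS.1, hT₃sub.trans hS.2⟩
    _ ≤ (((Finset.univ : Finset (Fin n)) \ T₃).powersetCard (s - 3)).card := by
        apply Finset.card_le_card_of_injOn (fun S => S \ T₃)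
        · intro S hS
          rw [Finset.mem_coe, Finset.mem_filter, Finset.mem_powersetCard] at hS
          rw [Finset.mem_coe, Finset.mem_powersetCard]
          refine ⟨fun x hx => ?_, ?_⟩
          · rw [Finset.mem_sdiff] at hx ⊢
            exact ⟨Finset.mem_univ _, hx.2⟩
          · rw [Finset.card_sdiff_of_subset hS.2, hS.1.2, hT₃card]
        · intro S hS S' hS' hEq
          rw [Finset.mem_coe, Finset.mem_filter] at hS hS'
          dsimp at hEq
          have : S \ T₃ ∪ T₃ = S' \ T₃ ∪ T₃ := by rw [hEq]
          rwa [Finset.sdiff_union_of_subset hS.2, Finset.sdiff_union_of_subset hS'.2] at this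
    _ = (n - 3).choose (s - 3) := by
        rw [Finset.card_powersetCard, Finset.card_sdiff_of_subset (Finset.subset_univ _), hT₃card,
          Finset.card_univ, Fintype.card_fin]

lemma count_lt {n k s : ℕ} (hs : 3 ≤ s) (hsn : s ≤ n)
    (h : 3 * s.choose 3 * (k.choose 2 - 1) + 3 ≤ n) :
    n.choose 2 * (k.choose 2 - 1) * ((n - 3).choose (s - 3)) < n.choose s := by
  have hc3 : 0 < s.choose 3 := Nat.choose_pos hs
  have hpos : 0 < (n - 3).choose (s - 3) := Nat.choose_pos (by omega)
  have hn2 : 0 < n.choose 2 := Nat.choose_pos (by omega)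
  -- step 1 : n.choose 2 * (k.choose 2 - 1) * s.choose 3 < n.choose 3
  have key : n.choose 2 * (k.choose 2 - 1) * s.choose 3 < n.choose 3 := by
    have h3 : n.choose 3 * 3 = n.choose 2 * (n - 2) := by
      have := Nat.choose_succ_right_eq n 2
      simpa using this
    have hlt : 3 * s.choose 3 * (k.choose 2 - 1) < n - 2 := by omega
    have : n.choose 2 * (k.choose 2 - 1) * s.choose 3 * 3
        < n.choose 2 * (n - 2) := by
      calc n.choose 2 * (k.choose 2 - 1) * s.choose 3 * 3
          = n.choose 2 * (3 * s.choose 3 * (k.choose 2 - 1)) := by ring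
        _ < n.choose 2 * (n - 2) := by
            exact mul_lt_mul_of_pos_left hlt hn2
    rw [← h3] at this
    omega
  -- step 2 : identity
  have hid : n.choose s * s.choose 3 = n.choose 3 * (n - 3).choose (s - 3) :=
    Nat.choose_mul hs
  have : n.choose 2 * (k.choose 2 - 1) * ((n - 3).choose (s - 3)) * s.choose 3
      < n.choose s * s.choose 3 := by
    calc n.choose 2 * (k.choose 2 - 1) * ((n - 3).choose (s - 3)) * s.choose 3
        = (n.choose 2 * (k.choose 2 - 1) * s.choose 3) * ((n - 3).choose (s - 3)) := by ring
      _ < n.choose 3 * ((n - 3).choose (s - 3)) := mul_lt_mul_of_pos_right key hpos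
      _ = n.choose s * s.choose 3 := by rw [hid]
  exact lt_of_mul_lt_mul_right this (Nat.zero_le _)

lemma arith_main {k s n : ℕ} (hk : 2 ≤ k) (hs : 2 ≤ s)
    (hn : ((k : ℝ) ^ 3 / 12) * (s : ℝ) ^ 3 ≤ (n : ℝ)) :
    3 * s.choose 3 * (k.choose 2 - 1) + 3 ≤ n := by
  have h12 : k ^ 3 * s ^ 3 ≤ 12 * n := by
    have : ((k : ℝ) ^ 3 * (s : ℝ) ^ 3) ≤ 12 * (n : ℝ) := by nlinarith
    exact_mod_cast this
  obtain ⟨a, rfl⟩ : ∃ a, k = a + 2 := ⟨k - 2, by omega⟩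
  obtain ⟨b, rfl⟩ : ∃ b, s = b + 2 := ⟨s - 2, by omega⟩
  have hc3 : (b + 2).choose 3 * 6 = (b + 2) * (b + 1) * b := by
    have h1 : (b + 2).descFactorial 3 = Nat.factorial 3 * (b + 2).choose 3 :=
      Nat.descFactorial_eq_factorial_mul_choose _ _
    have h2 : (b + 2).descFactorial 3 = b * ((b + 1) * ((b + 2) * 1)) := by
      simp [Nat.descFactorial]
    calc (b + 2).choose 3 * 6 = Nat.factorial 3 * (b + 2).choose 3 := by
          rw [show Nat.factorial 3 = 6 from rfl]; ring
      _ = b * ((b + 1) * ((b + 2) * 1)) := by rw [← h1, h2]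
      _ = (b + 2) * (b + 1) * b := by ring
  have hc2 : (a + 2).choose 2 * 2 = (a + 2) * (a + 1) := by
    have h1 : (a + 2).descFactorial 2 = Nat.factorial 2 * (a + 2).choose 2 :=
      Nat.descFactorial_eq_factorial_mul_choose _ _
    have h2 : (a + 2).descFactorial 2 = (a + 1) * ((a + 2) * 1) := by
      simp [Nat.descFactorial]
    calc (a + 2).choose 2 * 2 = Nat.factorial 2 * (a + 2).choose 2 := by
          rw [show Nat.factorial 2 = 2 from rfl]; ring
      _ = (a + 1) * ((a + 2) * 1) := by rw [← h1, h2]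
      _ = (a + 2) * (a + 1) := by ring
  -- key polynomial inequality
  have hkey : 3 * ((b + 2) * (b + 1) * b) * ((a + 2) * (a + 1) - 2) + 36
      ≤ (a + 2) ^ 3 * (b + 2) ^ 3 := by
    have e1 : (a + 2) * (a + 1) - 2 = a * (a + 3) := by ring_nf; omega
    rw [e1]
    have e2 : (a + 2) ^ 3 = 3 * (a * (a + 3)) + ((a + 1) ^ 3 + 7) := by ring
    rw [e2]
    have e3 : (b + 2) * (b + 1) * b ≤ (b + 2) ^ 3 := by nlinarith
    have e4 : 8 ≤ (b + 2) ^ 3 := by nlinarith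
    calc 3 * ((b + 2) * (b + 1) * b) * (a * (a + 3)) + 36
        ≤ 3 * (b + 2) ^ 3 * (a * (a + 3)) + 36 := by
          have := Nat.mul_le_mul_right (a * (a + 3)) (Nat.mul_le_mul_left 3 e3)
          omega
      _ ≤ 3 * (a * (a + 3)) * (b + 2) ^ 3 + ((a + 1) ^ 3 + 7) * (b + 2) ^ 3 := by
          have : 36 ≤ ((a + 1) ^ 3 + 7) * (b + 2) ^ 3 := by
            calc 36 ≤ 8 * 8 := by norm_num
              _ ≤ ((a + 1) ^ 3 + 7) * (b + 2) ^ 3 := by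
                  apply Nat.mul_le_mul (by nlinarith) e4
          have h' : 3 * (b + 2) ^ 3 * (a * (a + 3)) = 3 * (a * (a + 3)) * (b + 2) ^ 3 := by ring
          omega
      _ = (3 * (a * (a + 3)) + ((a + 1) ^ 3 + 7)) * (b + 2) ^ 3 := by ring
  -- assemble
  have hsub : (a + 2).choose 2 - 1 = ((a + 2) * (a + 1) - 2) / 2 := by omega
  have goal12 : 12 * (3 * (b + 2).choose 3 * ((a + 2).choose 2 - 1) + 3) ≤ 12 * n := by
    have expand : 12 * (3 * (b + 2).choose 3 * ((a + 2).choose 2 - 1) + 3)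
        = 3 * ((b + 2).choose 3 * 6) * (((a + 2).choose 2 - 1) * 2) + 36 := by ring
    rw [expand, hc3]
    have hc2' : ((a + 2).choose 2 - 1) * 2 = (a + 2) * (a + 1) - 2 := by omega
    rw [hc2']
    calc 3 * ((b + 2) * (b + 1) * b) * ((a + 2) * (a + 1) - 2) + 36
        ≤ (a + 2) ^ 3 * (b + 2) ^ 3 := hkey
      _ = (a + 2) ^ 3 * (b + 2) ^ 3 := rfl
      _ ≤ 12 * n := h12
  omega

lemma exists_good_set {n k s : ℕ} (hk : 2 ≤ k) (hs : 3 ≤ s) (hsn : s ≤ n)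
    (hcond : 3 * s.choose 3 * (k.choose 2 - 1) + 3 ≤ n)
    (D : Sym2 (Fin n) → Finset (Fin n))
    (hD : ∀ p : Sym2 (Fin n), ¬p.IsDiag → (D p).card ≤ k ∧ ∀ a ∈ p, a ∈ D p) :
    ∃ S : Finset (Fin n), S.card = s ∧ ∀ p q : Sym2 (Fin n), ¬p.IsDiag → ¬q.IsDiag →
      (∀ a ∈ p, a ∈ S) → (∀ a ∈ q, a ∈ S) → D p = D q → p = q := by
  by_contra hcon
  push_neg at hcon
  -- the set of "conflicts"
  set conf : Finset (Sym2 (Fin n) × Sym2 (Fin n)) :=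
    Finset.univ.filter (fun z => ¬z.1.IsDiag ∧ ¬z.2.IsDiag ∧ D z.1 = D z.2 ∧ z.1 ≠ z.2)
    with hconf
  set P := (Finset.univ : Finset (Fin n)).powersetCard s with hP
  -- vertices of a conflict
  set verts : Sym2 (Fin n) × Sym2 (Fin n) → Finset (Fin n) :=
    fun z => Finset.univ.filter (fun v => v ∈ z.1 ∨ v ∈ z.2) with hverts
  -- every S in P contains a conflict
  have hbad : ∀ S ∈ P, ∃ z ∈ conf, verts z ⊆ S := by
    intro S hS
    rw [hP, Finset.mem_powersetCard] at hS
    obtain ⟨p, q, hp, hq, hpS, hqS, hDpq, hne⟩ := hcon S hS.2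
    refine ⟨(p, q), ?_, ?_⟩
    · rw [hconf, Finset.mem_filter]
      exact ⟨Finset.mem_univ _, hp, hq, hDpq, hne⟩
    · intro v hv
      rw [hverts] at hv
      simp only [Finset.mem_filter] at hv
      rcases hv.2 with h | h
      · exact hpS v h
      · exact hqS v h
  -- each conflict has at least 3 vertices
  have hverts3 : ∀ z ∈ conf, 3 ≤ (verts z).card := by
    rintro ⟨p, q⟩ hz
    rw [hconf, Finset.mem_filter] at hz
    obtain ⟨-, hp, hq, hDpq, hne⟩ := hz
    induction p using Sym2.inductionOn with
    | hf a b =>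
    induction q using Sym2.inductionOn with
    | hf c d =>
    rw [Sym2.mk_isDiag_iff] at hp hq
    -- some element of q is not in p
    have hx : ∃ x, x ∈ s(c, d) ∧ x ∉ s(a, b) := by
      by_contra hxc
      push_neg at hxc
      have hc := hxc c (Sym2.mem_mk_left c d)
      have hd := hxc d (Sym2.mem_mk_right c d)
      rw [Sym2.mem_iff] at hc hd
      apply hne
      rcases hc with rfl | rfl <;> rcases hd with rfl | rfl <;>
        first
        | exact absurd rfl hq
        | rfl
        | exact Sym2.eq_swap.symm
    obtain ⟨x, hxq, hxp⟩ := hx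
    have hsub : {a, b, x} ⊆ verts (s(a,b), s(c,d)) := by
      intro v hv
      rw [hverts]
      simp only [Finset.mem_insert, Finset.mem_singleton] at hv
      simp only [Finset.mem_filter]
      refine ⟨Finset.mem_univ _, ?_⟩
      rcases hv with rfl | rfl | rfl
      · exact Or.inl (Sym2.mem_mk_left _ _)
      · exact Or.inl (Sym2.mem_mk_right _ _)
      · exact Or.inr hxq
    have hcard : ({a, b, x} : Finset (Fin n)).card = 3 := by
      rw [Sym2.mem_iff] at hxp
      push_neg at hxp
      rw [Finset.card_insert_of_notMem (by
            simp only [Finset.mem_insert, Finset.mem_singleton]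
            push_neg
            exact ⟨hp, fun h => hxp.1 h.symm⟩),
          Finset.card_insert_of_notMem (by
            simp only [Finset.mem_singleton]
            exact fun h => hxp.2 h.symm),
          Finset.card_singleton]
    calc 3 = ({a, b, x} : Finset (Fin n)).card := hcard.symm
      _ ≤ (verts (s(a,b), s(c,d))).card := Finset.card_le_card hsub
  -- bound on the number of conflicts
  have hconfcard : conf.card ≤ n.choose 2 * (k.choose 2 - 1) := by
    set t : Finset (Sym2 (Fin n)) := Finset.univ.filter (fun p => ¬ p.IsDiag) with ht
    have htc : t.card = n.choose 2 := by
      rw [ht, ← Finset.sym2_univ, card_sym2_not_isDiag, Finset.card_univ, Fintype.card_fin]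
    have hmem : ∀ z ∈ conf, z.1 ∈ t := by
      intro z hz
      rw [hconf, Finset.mem_filter] at hz
      rw [ht, Finset.mem_filter]
      exact ⟨Finset.mem_univ _, hz.2.1⟩
    rw [Finset.card_eq_sum_card_fiberwise hmem]
    have hfib : ∀ p ∈ t, (conf.filter (fun z => z.1 = p)).card ≤ k.choose 2 - 1 := by
      intro p hp
      rw [ht, Finset.mem_filter] at hp
      have hpD := hD p hp.2
      have hinj : ∀ z ∈ conf.filter (fun z => z.1 = p),
          z.2 ∈ (((D p).sym2.filter (fun q => ¬ q.IsDiag)).erase p) := by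
        intro z hz
        rw [Finset.mem_filter, hconf, Finset.mem_filter] at hz
        obtain ⟨⟨-, hz1, hz2, hzD, hzne⟩, hz1p⟩ := hz
        rw [Finset.mem_erase, Finset.mem_filter, Finset.mem_sym2_iff]
        refine ⟨fun h => hzne (by rw [hz1p, h]), fun a ha => ?_, hz2⟩
        rw [← hz1p, hzD]
        exact (hD z.2 hz2).2 a ha
      have hcardle := Finset.card_le_card_of_injOn
        (fun z : Sym2 (Fin n) × Sym2 (Fin n) => z.2) hinj (by
        intro z hz z' hz' hEq
        rw [Finset.mem_coe, Finset.mem_filter] at hz hz'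
        dsimp at hEq
        exact Prod.ext (hz.2.trans hz'.2.symm) hEq)
      refine le_trans hcardle ?_
      have hpmem : p ∈ (D p).sym2.filter (fun q => ¬ q.IsDiag) := by
        rw [Finset.mem_filter, Finset.mem_sym2_iff]
        exact ⟨hpD.2, hp.2⟩
      rw [Finset.card_erase_of_mem hpmem, card_sym2_not_isDiag]
      have := Nat.choose_le_choose 2 hpD.1
      omega
    calc ∑ p ∈ t, (conf.filter (fun z => z.1 = p)).card
        ≤ ∑ p ∈ t, (k.choose 2 - 1) := Finset.sum_le_sum hfib
      _ = n.choose 2 * (k.choose 2 - 1) := by rw [Finset.sum_const, htc, smul_eq_mul]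
  -- double counting
  have hdc : P.card ≤ conf.card * ((n - 3).choose (s - 3)) := by
    have step1 : P.card ≤ ∑ S ∈ P, (conf.filter (fun z => verts z ⊆ S)).card := by
      rw [Finset.card_eq_sum_ones P]
      apply Finset.sum_le_sum
      intro S hS
      obtain ⟨z, hz, hsubz⟩ := hbad S hS
      exact Nat.one_le_iff_ne_zero.2
        (Finset.card_ne_zero_of_mem (Finset.mem_filter.2 ⟨hz, hsubz⟩))
    have step2 : ∑ S ∈ P, (conf.filter (fun z => verts z ⊆ S)).card
        = ∑ z ∈ conf, (P.filter (fun S => verts z ⊆ S)).card := by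
      simp_rw [Finset.card_filter]
      rw [Finset.sum_comm]
    have step3 : ∑ z ∈ conf, (P.filter (fun S => verts z ⊆ S)).card
        ≤ conf.card * ((n - 3).choose (s - 3)) := by
      calc ∑ z ∈ conf, (P.filter (fun S => verts z ⊆ S)).card
          ≤ ∑ _z ∈ conf, (n - 3).choose (s - 3) := by
            apply Finset.sum_le_sum
            intro z hz
            rw [hP]
            exact card_supersets_le (verts z) (hverts3 z hz)
        _ = conf.card * ((n - 3).choose (s - 3)) := by
            rw [Finset.sum_const, smul_eq_mul]
    omega
  rw [hP, Finset.card_powersetCard, Finset.card_univ, Fintype.card_fin] at hdc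
  have := count_lt (k := k) hs hsn hcond
  have : n.choose s ≤ n.choose 2 * (k.choose 2 - 1) * ((n - 3).choose (s - 3)) :=
    le_trans hdc (Nat.mul_le_mul_right _ hconfcard)
  omega

lemma exists_core {n k s : ℕ} (hk : 2 ≤ k) (hs : 2 ≤ s) (hsn : s ≤ n)
    (hcond : 3 * s.choose 3 * (k.choose 2 - 1) + 3 ≤ n)
    (H : Finset (Finset (Fin n))) (hunif : ∀ h ∈ H, h.card ≤ k)
    (hcov : ∀ u v : Fin n, u ≠ v → ∃ h ∈ H, u ∈ h ∧ v ∈ h) :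
    ∃ (g : Fin s → Fin n) (E : Sym2 (Fin s) → Finset (Fin n)),
      Function.Injective g ∧
      (∀ p : Sym2 (Fin s), ¬p.IsDiag → E p ∈ H ∧ ∀ a ∈ p, g a ∈ E p) ∧
      Set.InjOn E {p : Sym2 (Fin s) | ¬p.IsDiag} := by
  -- choose a covering edge for each nondiagonal pair
  have hex : ∀ p : Sym2 (Fin n), ∃ h : Finset (Fin n),
      ¬p.IsDiag → h ∈ H ∧ ∀ a ∈ p, a ∈ h := by
    intro p
    induction p using Sym2.inductionOn with
    | hf u v =>
      by_cases huv : u = v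
      · exact ⟨∅, fun hd => absurd (Sym2.mk_isDiag_iff.2 huv) hd⟩
      · obtain ⟨h, hH, hu, hv⟩ := hcov u v huv
        refine ⟨h, fun _ => ⟨hH, fun a ha => ?_⟩⟩
        rcases Sym2.mem_iff.1 ha with rfl | rfl
        exacts [hu, hv]
  choose D hD' using hex
  -- a good set S of size s
  have hgood : ∃ S : Finset (Fin n), S.card = s ∧
      ∀ p q : Sym2 (Fin n), ¬p.IsDiag → ¬q.IsDiag →
      (∀ a ∈ p, a ∈ S) → (∀ a ∈ q, a ∈ S) → D p = D q → p = q := by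
    rcases eq_or_lt_of_le hs with hs2 | hs3
    · -- s = 2 : any set of size 2 works
      obtain ⟨S, -, hScard⟩ :=
        Finset.exists_subset_card_eq (show s ≤ (Finset.univ : Finset (Fin n)).card by
          rw [Finset.card_univ, Fintype.card_fin]; exact hsn)
      refine ⟨S, hScard, ?_⟩
      obtain ⟨x, y, hxy, hSxy⟩ := Finset.card_eq_two.1 (by rw [hScard, ← hs2])
      have key : ∀ p : Sym2 (Fin n), ¬p.IsDiag → (∀ a ∈ p, a ∈ S) → p = s(x, y) := by
        intro p
        induction p using Sym2.inductionOn with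
        | hf a b =>
          intro hd hmem
          rw [Sym2.mk_isDiag_iff] at hd
          have ha := hmem a (Sym2.mem_mk_left a b)
          have hb := hmem b (Sym2.mem_mk_right a b)
          rw [hSxy, Finset.mem_insert, Finset.mem_singleton] at ha hb
          rcases ha with rfl | rfl <;> rcases hb with rfl | rfl
          · exact absurd rfl hd
          · rfl
          · exact Sym2.eq_swap
          · exact absurd rfl hd
      intro p q hp hq hpS hqS _
      rw [key p hp hpS, key q hq hqS]
    · -- s ≥ 3 : counting argument
      apply exists_good_set hk hs3 hsn hcond D
      intro p hp
      obtain ⟨hH, hmem⟩ := hD' p hp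
      exact ⟨hunif _ hH, hmem⟩
  obtain ⟨S, hScard, hSgood⟩ := hgood
  set g : Fin s → Fin n := fun i => ((S.orderIsoOfFin hScard) i : Fin n) with hg
  have hginj : Function.Injective g := by
    intro i j hij
    exact (S.orderIsoOfFin hScard).injective (Subtype.ext hij)
  have hgS : ∀ i, g i ∈ S := fun i => ((S.orderIsoOfFin hScard) i).2
  refine ⟨g, fun p => D (Sym2.map g p), hginj, ?_, ?_⟩
  · intro p hp
    have hmap : ¬(Sym2.map g p).IsDiag := by
      induction p using Sym2.inductionOn with
      | hf a b =>
        rw [Sym2.map_pair_eq, Sym2.mk_isDiag_iff]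
        rw [Sym2.mk_isDiag_iff] at hp
        exact fun h => hp (hginj h)
    obtain ⟨hH, hmem⟩ := hD' _ hmap
    refine ⟨hH, fun a ha => hmem _ ?_⟩
    rw [Sym2.mem_map]
    exact ⟨a, ha, rfl⟩
  · intro p hp q hq hEq
    simp only [Set.mem_setOf_eq] at hp hq
    have hmapd : ∀ r : Sym2 (Fin s), ¬r.IsDiag → ¬(Sym2.map g r).IsDiag := by
      intro r hr
      induction r using Sym2.inductionOn with
      | hf a b =>
        rw [Sym2.map_pair_eq, Sym2.mk_isDiag_iff]
        rw [Sym2.mk_isDiag_iff] at hr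
        exact fun h => hr (hginj h)
    have hmemS : ∀ r : Sym2 (Fin s), ∀ a ∈ Sym2.map g r, a ∈ S := by
      intro r a ha
      rw [Sym2.mem_map] at ha
      obtain ⟨b, -, rfl⟩ := ha
      exact hgS b
    have := hSgood _ _ (hmapd p hp) (hmapd q hq) (hmemS p) (hmemS q) hEq
    exact Sym2.map.injective hginj this

lemma berge_of_embedding {α : Type*} {n s : ℕ} (G : SimpleGraph α)
    (H : Finset (Finset (Fin n))) (col : Finset (Fin n) → Bool) (c : Bool)
    (g : Fin s → Fin n) (E : Sym2 (Fin s) → Finset (Fin n))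
    (hginj : Function.Injective g)
    (hE : ∀ p : Sym2 (Fin s), ¬p.IsDiag → E p ∈ H ∧ ∀ a ∈ p, g a ∈ E p)
    (hEinj : Set.InjOn E {p : Sym2 (Fin s) | ¬p.IsDiag})
    (φ : α → Fin s) (hφ : Function.Injective φ)
    (hcol : ∀ u v, G.Adj u v → col (E s(φ u, φ v)) = c) :
    HasBergeCopy G H (fun h => col h = c) := by
  refine ⟨g ∘ φ, fun e => E (Sym2.map φ e), hginj.comp hφ, ?_, ?_⟩
  · intro e₁ he₁ e₂ he₂ hEq
    have hd : ∀ e ∈ G.edgeSet, ¬(Sym2.map φ e).IsDiag := by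
      intro e he
      have hnd := (SimpleGraph.not_isDiag_of_mem_edgeSet G he)
      induction e using Sym2.inductionOn with
      | hf a b =>
        rw [Sym2.map_pair_eq, Sym2.mk_isDiag_iff]
        rw [Sym2.mk_isDiag_iff] at hnd
        exact fun h => hnd (hφ h)
    have := hEinj (hd e₁ he₁) (hd e₂ he₂) hEq
    exact Sym2.map.injective hφ this
  · intro e he
    induction e using Sym2.inductionOn with
    | hf u v =>
      rw [SimpleGraph.mem_edgeSet] at he
      have hnd : ¬(Sym2.map φ s(u, v)).IsDiag := by
        rw [Sym2.map_pair_eq, Sym2.mk_isDiag_iff]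
        exact fun h => he.ne (hφ h)
      obtain ⟨hH, hmem⟩ := hE _ hnd
      refine ⟨hH, ?_, ?_⟩
      · dsimp only
        rw [Sym2.map_pair_eq]
        exact hcol u v he
      · intro w hw
        rcases Sym2.mem_iff.1 hw with rfl | rfl
        · exact hmem (φ w) (by rw [Sym2.map_pair_eq]; exact Sym2.mem_mk_left _ _)
        · exact hmem (φ w) (by rw [Sym2.map_pair_eq]; exact Sym2.mem_mk_right _ _)

theorem cover_ramsey_upper_bound
    {α₁ α₂ : Type*} [Fintype α₁] [Fintype α₂]
    (G₁ : SimpleGraph α₁) (G₂ : SimpleGraph α₂)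
    (hG₁ : G₁.edgeSet.Nonempty) (hG₂ : G₂.edgeSet.Nonempty)
    (k s : ℕ) (hk : 2 ≤ k) (hs : 2 ≤ s)
    (hRam : ∀ χ : Sym2 (Fin s) → Bool,
      (∃ φ : α₁ → Fin s, Function.Injective φ ∧
        ∀ u v, G₁.Adj u v → χ s(φ u, φ v) = true) ∨
      (∃ φ : α₂ → Fin s, Function.Injective φ ∧
        ∀ u v, G₂.Adj u v → χ s(φ u, φ v) = false))
    (n : ℕ) (hn : ((k : ℝ) ^ 3 / 12) * (s : ℝ) ^ 3 ≤ (n : ℝ))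
    (H : Finset (Finset (Fin n)))
    (hunif : ∀ h ∈ H, 1 ≤ h.card ∧ h.card ≤ k)
    (hcov : ∀ u v : Fin n, u ≠ v → ∃ h ∈ H, u ∈ h ∧ v ∈ h)
    (col : Finset (Fin n) → Bool) :
    HasBergeCopy G₁ H (fun h => col h = true) ∨
      HasBergeCopy G₂ H (fun h => col h = false) := by
  have hcond := arith_main hk hs hn
  have hsn : s ≤ n := by
    have h12 : k ^ 3 * s ^ 3 ≤ 12 * n := by
      have : ((k : ℝ) ^ 3 * (s : ℝ) ^ 3) ≤ 12 * (n : ℝ) := by nlinarith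
      exact_mod_cast this
    have h8 : 8 * s ^ 3 ≤ 12 * n := by
      have : 2 ^ 3 ≤ k ^ 3 := Nat.pow_le_pow_left hk 3
      nlinarith
    have hsq : 4 ≤ s ^ 2 := by nlinarith
    have hcube : s * 4 ≤ s ^ 3 := by
      calc s * 4 ≤ s * s ^ 2 := Nat.mul_le_mul_left s hsq
        _ = s ^ 3 := by ring
    nlinarith [h8, hcube]
  obtain ⟨g, E, hginj, hE, hEinj⟩ :=
    exists_core hk hs hsn hcond H (fun h hh => (hunif h hh).2) hcov
  rcases hRam (fun p => col (E p)) with ⟨φ, hφ, hcol⟩ | ⟨φ, hφ, hcol⟩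
  · exact Or.inl (berge_of_embedding G₁ H col true g E hginj hE hEinj φ hφ hcol)
  · exact Or.inr (berge_of_embedding G₂ H col false g E hginj hE hEinj φ hφ hcol)
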